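/- The index of the sublattice M ⊕ R in L_- is 3, where L_- = U ⊕ U(2) ⊕ E8(2), M = U ⊕ U(2) ⊕ A2(2) is primitively embedded in L_-, and R ≅ E6(2) is its orthogonal complement; equivalently, |det(M)| · |det(R)| = 9 · |det(L_-)|. -/

import Mathlib

noncomputable section
open Matrix

/-- The Gram matrix of `M = U ⊕ U(2) ⊕ A2(2)`. -/
def Mgram : Matrix (Fin 6) (Fin 6) ℤ :=
  !![0,1,0,0,0,0; 1,0,0,0,0,0; 0,0,0,2,0,0; 0,0,2,0,0,0; 0,0,0,0,-4,2; 0,0,0,0,2,-4]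

/-- The Gram matrix of the negative definite root lattice `E6`
(negative of the Cartan matrix). -/
def E6gram : Matrix (Fin 6) (Fin 6) ℤ :=
  !![-2,1,0,0,0,0;
    1,-2,1,0,0,0;
    0,1,-2,1,0,1;
    0,0,1,-2,1,0;
    0,0,0,1,-2,0;
    0,0,1,0,0,-2]

/-- The Gram matrix of `R = E6(2)`, the orthogonal complement of `M` in `L₋`. -/
def Rgram : Matrix (Fin 6) (Fin 6) ℤ := 2 • E6gram

/-- The Gram matrix of `L₋ = U ⊕ U(2) ⊕ E8(2)`. -/
def Lgram : Matrix (Fin 12) (Fin 12) ℤ :=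
  !![0,1,0,0,0,0,0,0,0,0,0,0;
    1,0,0,0,0,0,0,0,0,0,0,0;
    0,0,0,2,0,0,0,0,0,0,0,0;
    0,0,2,0,0,0,0,0,0,0,0,0;
    0,0,0,0,-4,2,0,0,0,0,0,0;
    0,0,0,0,2,-4,2,0,0,0,0,0;
    0,0,0,0,0,2,-4,2,0,0,0,2;
    0,0,0,0,0,0,2,-4,2,0,0,0;
    0,0,0,0,0,0,0,2,-4,2,0,0;
    0,0,0,0,0,0,0,0,2,-4,2,0;
    0,0,0,0,0,0,0,0,0,2,-4,0;
    0,0,0,0,0,0,2,0,0,0,0,-4]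


-- Auxiliary machinery: compute the three determinants via triangular
-- factorizations `P * (row-permuted G) = T`.
section Aux


def PM : Matrix (Fin 6) (Fin 6) ℤ :=
  !![1,0,0,0,0,0; 0,1,0,0,0,0; 0,0,1,0,0,0; 0,0,0,1,0,0; 0,0,0,0,1,0; 0,0,0,0,1,2]

def TM : Matrix (Fin 6) (Fin 6) ℤ :=
  !![1,0,0,0,0,0; 0,1,0,0,0,0; 0,0,2,0,0,0; 0,0,0,2,0,0; 0,0,0,0,-4,2; 0,0,0,0,0,-6]

def PR : Matrix (Fin 6) (Fin 6) ℤ :=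
  !![1,0,0,0,0,0; 1,2,0,0,0,0; 1,2,3,0,0,0; 1,2,3,4,0,0; 1,2,3,4,5,0; 1,2,3,2,1,2]

def TR : Matrix (Fin 6) (Fin 6) ℤ :=
  !![-4,2,0,0,0,0; 0,-6,4,0,0,0; 0,0,-8,6,0,6; 0,0,0,-10,8,6; 0,0,0,0,-12,6; 0,0,0,0,0,-2]

def PL : Matrix (Fin 12) (Fin 12) ℤ :=
  !![1,0,0,0,0,0,0,0,0,0,0,0;
    0,1,0,0,0,0,0,0,0,0,0,0;
    0,0,1,0,0,0,0,0,0,0,0,0;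
    0,0,0,1,0,0,0,0,0,0,0,0;
    0,0,0,0,1,0,0,0,0,0,0,0;
    0,0,0,0,1,2,0,0,0,0,0,0;
    0,0,0,0,1,2,3,0,0,0,0,0;
    0,0,0,0,1,2,3,4,0,0,0,0;
    0,0,0,0,1,2,3,4,5,0,0,0;
    0,0,0,0,1,2,3,4,5,6,0,0;
    0,0,0,0,1,2,3,4,5,6,7,0;
    0,0,0,0,5,10,15,12,9,6,3,8]

def TL : Matrix (Fin 12) (Fin 12) ℤ :=
  !![1,0,0,0,0,0,0,0,0,0,0,0;
    0,1,0,0,0,0,0,0,0,0,0,0;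
    0,0,2,0,0,0,0,0,0,0,0,0;
    0,0,0,2,0,0,0,0,0,0,0,0;
    0,0,0,0,-4,2,0,0,0,0,0,0;
    0,0,0,0,0,-6,4,0,0,0,0,0;
    0,0,0,0,0,0,-8,6,0,0,0,6;
    0,0,0,0,0,0,0,-10,8,0,0,6;
    0,0,0,0,0,0,0,0,-12,10,0,6;
    0,0,0,0,0,0,0,0,0,-14,12,6;
    0,0,0,0,0,0,0,0,0,0,-16,6;
    0,0,0,0,0,0,0,0,0,0,0,-2]

/-- The row permutation (two disjoint swaps, hence even). -/
def sig6 : Equiv.Perm (Fin 6) := Equiv.swap 0 1 * Equiv.swap 2 3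

def sig12 : Equiv.Perm (Fin 12) := Equiv.swap 0 1 * Equiv.swap 2 3

lemma det_eq_of_fact {n : ℕ} [NeZero n] (P T G : Matrix (Fin n) (Fin n) ℤ)
    (sg : Equiv.Perm (Fin n)) (p t d : ℤ)
    (hfact : P * G.submatrix sg id = T)
    (hP : P.BlockTriangular (OrderDual.toDual : Fin n → (Fin n)ᵒᵈ))
    (hT : T.BlockTriangular (id : Fin n → Fin n))
    (hsg : Equiv.Perm.sign sg = 1)
    (hp : ∏ i, P i i = p) (ht : ∏ i, T i i = t)
    (hpd : p * d = t) (hp0 : p ≠ 0) :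
    G.det = d := by
  have h1 : P.det * (G.submatrix sg id).det = T.det := by
    rw [← Matrix.det_mul, hfact]
  rw [Matrix.det_permute, hsg] at h1
  rw [Matrix.det_of_lowerTriangular P hP, Matrix.det_of_upperTriangular hT, hp, ht] at h1
  have h2 : p * G.det = t := by simpa using h1
  exact mul_left_cancel₀ hp0 (by rw [hpd, h2])

lemma hMdet : Mgram.det = 48 := by
  refine det_eq_of_fact PM TM Mgram sig6 2 96 48 ?_ ?_ ?_ ?_ ?_ ?_ (by norm_num) (by norm_num)
  · decide
  · have h : ∀ i j : Fin 6, (OrderDual.toDual j : (Fin 6)ᵒᵈ) < OrderDual.toDual i → Matrix.of.symm PM i j = 0 := by decide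
    exact fun i j hij => h i j hij
  · have h : ∀ i j : Fin 6, (id j : Fin 6) < id i → Matrix.of.symm TM i j = 0 := by decide
    exact fun i j hij => h i j hij
  · decide
  · decide
  · decide

lemma hRdet : Rgram.det = 192 := by
  refine det_eq_of_fact PR TR Rgram (1 : Equiv.Perm (Fin 6)) 240 46080 192 ?_ ?_ ?_ ?_ ?_ ?_ (by norm_num) (by norm_num)
  · decide
  · have h : ∀ i j : Fin 6, (OrderDual.toDual j : (Fin 6)ᵒᵈ) < OrderDual.toDual i → Matrix.of.symm PR i j = 0 := by decide
    exact fun i j hij => h i j hij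
  · have h : ∀ i j : Fin 6, (id j : Fin 6) < id i → Matrix.of.symm TR i j = 0 := by decide
    exact fun i j hij => h i j hij
  · simp
  · decide
  · decide

set_option maxRecDepth 10000 in
lemma hLdet : Lgram.det = 1024 := by
  refine det_eq_of_fact PL TL Lgram sig12 40320 41287680 1024 ?_ ?_ ?_ ?_ ?_ ?_ (by norm_num) (by norm_num)
  · decide
  · have h : ∀ i j : Fin 12, (OrderDual.toDual j : (Fin 12)ᵒᵈ) < OrderDual.toDual i → Matrix.of.symm PL i j = 0 := by decide
    exact fun i j hij => h i j hij
  · have h : ∀ i j : Fin 12, (id j : Fin 12) < id i → Matrix.of.symm TL i j = 0 := by decide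
    exact fun i j hij => h i j hij
  · decide
  · decide
  · decide

end Aux

/-- The index of the sublattice `M ⊕ R` in `L₋` is 3, where
`L₋ = U ⊕ U(2) ⊕ E8(2)`, `M = U ⊕ U(2) ⊕ A2(2)` is primitively embedded in
`L₋` and `R ≅ E6(2)` is its orthogonal complement; equivalently (via
`[L₋ : M ⊕ R]² = det(M)·det(R)/det(L₋)`), one has
`|det(M)| · |det(R)| = 9 · |det(L₋)|`. -/
theorem index_of_M_oplus_R :
    (Mgram.det * Rgram.det).natAbs = 9 * Lgram.det.natAbs := by
  rw [hMdet, hRdet, hLdet]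
  decide
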